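/- For integers p, q, e, the equation e + p·q = −2αβ + p·β + q·α has a solution in integers α, β if and only if p is odd, or q is odd, or e is even. -/
import Mathlib


theorem lk_two_nh_two_criterion (p q e : ℤ) :
    (∃ α β : ℤ, e + p * q = -2 * α * β + p * β + q * α) ↔
      (Odd p ∨ Odd q ∨ Even e) := by
  constructor
  · rintro ⟨α, β, h⟩
    by_contra hc
    push_neg at hc
    obtain ⟨h1, h2, h3⟩ := hc
    rw [Int.not_odd_iff_even] at h1 h2
    rw [Int.not_even_iff_odd] at h3
    obtain ⟨a, ha⟩ := h1
    obtain ⟨b, hb⟩ := h2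
    obtain ⟨c, hcc⟩ := h3
    subst ha hb hcc
    have h1 : 2 * (-α*β + a*β + b*α - 2*a*b - c) = 1 := by linear_combination -h
    omega
  · rintro (⟨k, hk⟩ | ⟨k, hk⟩ | ⟨c, hc⟩)
    · exact ⟨k, e + p*q - q*k, by subst hk; ring⟩
    · exact ⟨e + p*q - p*k, k, by subst hk; ring⟩
    · rcases Int.even_or_odd p with ⟨a, ha⟩ | ⟨a, ha⟩
      · rcases Int.even_or_odd q with ⟨b, hb⟩ | ⟨b, hb⟩
        · exact ⟨a + 1, b - c - a*b, by subst ha hb hc; ring⟩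
        · exact ⟨e + p*q - p*b, b, by subst hb; ring⟩
      · exact ⟨a, e + p*q - q*a, by subst ha; ring⟩
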